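/- For every σ ∈ [1/2, 1] there exists a constant C > 0 such that for all real a ≥ 0 and all y ∈ (0,1], the series ∑_{n=1}^∞ n·sin(nπy)/(n² + a²) converges (in the sense that its partial sums converge) and its sum S satisfies |S| ≤ C·y^{σ−1}·(1 + a)^{σ−1}. -/

import Mathlib

open Real Filter

private lemma sinsum_eq (θ : ℝ) (K : ℕ) :
    2 * Real.sin (θ/2) * ∑ i ∈ Finset.range K, Real.sin (((i:ℝ)+1) * θ)
      = Real.cos (θ/2) - Real.cos (((K:ℝ) + 1/2) * θ) := by
  induction K with
  | zero =>
    have : ((0:ℕ):ℝ) + 1/2 = 1/2 := by norm_num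
    simp only [Finset.range_zero, Finset.sum_empty, mul_zero]
    rw [this]
    have : (1/2 : ℝ) * θ = θ/2 := by ring
    rw [this, sub_self]
  | succ K ih =>
    rw [Finset.sum_range_succ, mul_add, ih]
    have h1 : ((K:ℝ) + 1/2) * θ = (((K:ℝ)+1)*θ) - θ/2 := by ring
    have h2 : (((K+1:ℕ):ℝ) + 1/2) * θ = (((K:ℝ)+1)*θ) + θ/2 := by push_cast; ring
    rw [h1, h2, Real.cos_sub, Real.cos_add]
    ring

set_option maxHeartbeats 1000000 in
theorem sin_series_uniform_bound (σ : ℝ) (hσ : σ ∈ Set.Icc (1/2 : ℝ) 1) :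
    ∃ C : ℝ, 0 < C ∧ ∀ a : ℝ, 0 ≤ a → ∀ y : ℝ, 0 < y → y ≤ 1 →
      ∃ S : ℝ,
        Tendsto (fun N : ℕ => ∑ n ∈ Finset.Icc 1 N,
            (n : ℝ) * Real.sin (n * π * y) / ((n : ℝ) ^ 2 + a ^ 2)) atTop (nhds S)
        ∧ |S| ≤ C * y ^ (σ - 1) * (1 + a) ^ (σ - 1) := by
  obtain ⟨hσ1, hσ2⟩ := hσ
  have hπ := Real.pi_pos
  have hπ4 := Real.pi_le_four
  refine ⟨200, by norm_num, ?_⟩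
  intro a ha y hy0 hy1
  set θ := π * y with hθdef
  have hθ0 : 0 < θ := mul_pos hπ hy0
  have hθπ : θ ≤ π := by nlinarith
  -- Jordan: y ≤ sin (θ/2)
  have hsin : y ≤ Real.sin (θ/2) := by
    have h := Real.mul_le_sin (x := θ/2) (by positivity) (by linarith)
    have e : 2/π * (θ/2) = y := by
      rw [hθdef]; field_simp
    linarith [e ▸ h]
  have hsθ : 0 < Real.sin (θ/2) := lt_of_lt_of_le hy0 hsin
  -- partial sums of sines
  set P : ℕ → ℝ := fun K => ∑ i ∈ Finset.range K, Real.sin (((i:ℝ)+1) * θ) with hP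
  have hP1 : ∀ K, |P K| ≤ 1/y := by
    intro K
    have h := sinsum_eq θ K
    have h2 : |2 * Real.sin (θ/2) * P K| ≤ 2 := by
      rw [hP]
      rw [h]
      calc |Real.cos (θ/2) - Real.cos (((K:ℝ)+1/2)*θ)|
          ≤ |Real.cos (θ/2)| + |Real.cos (((K:ℝ)+1/2)*θ)| := abs_sub _ _
        _ ≤ 1 + 1 := add_le_add (Real.abs_cos_le_one _) (Real.abs_cos_le_one _)
        _ = 2 := by norm_num
    have e1 : |2 * Real.sin (θ/2) * P K| = 2 * Real.sin (θ/2) * |P K| := by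
      rw [abs_mul, abs_of_pos (by positivity : (0:ℝ) < 2 * Real.sin (θ/2))]
    rw [e1] at h2
    have h3 : |P K| ≤ 1 / Real.sin (θ/2) := by
      rw [le_div_iff₀ hsθ]; nlinarith
    exact h3.trans (one_div_le_one_div_of_le hy0 hsin)
  have hP2 : ∀ K : ℕ, |P K| ≤ π * y * (K:ℝ)^2 := by
    intro K
    calc |P K| ≤ ∑ i ∈ Finset.range K, |Real.sin (((i:ℝ)+1) * θ)| :=
          Finset.abs_sum_le_sum_abs _ _
      _ ≤ ∑ i ∈ Finset.range K, (K:ℝ) * θ := by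
          refine Finset.sum_le_sum fun i hi => ?_
          have h1 : |Real.sin (((i:ℝ)+1) * θ)| ≤ |((i:ℝ)+1) * θ| := Real.abs_sin_le_abs
          have h2 : |((i:ℝ)+1) * θ| = ((i:ℝ)+1) * θ := abs_of_nonneg (by positivity)
          have h3 : (i:ℝ) + 1 ≤ (K:ℝ) := by
            exact_mod_cast Nat.succ_le_of_lt (Finset.mem_range.mp hi)
          nlinarith
      _ = (K:ℝ) * ((K:ℝ) * θ) := by
          rw [Finset.sum_const, Finset.card_range, nsmul_eq_mul]
      _ = π * y * (K:ℝ)^2 := by rw [hθdef]; ring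
  -- coefficients
  set c : ℕ → ℝ := fun n => (n:ℝ) / ((n:ℝ)^2 + a^2) with hc
  have hΔ : ∀ i : ℕ, |c (i+2) - c (i+1)| ≤ 2 / (((i:ℝ)+2)^2 + a^2) := by
    intro i
    have hm : (1:ℝ) ≤ (i:ℝ) + 1 := by linarith [show (0:ℝ) ≤ (i:ℝ) from Nat.cast_nonneg i]
    have h1 : (0:ℝ) < ((i:ℝ)+1)^2 + a^2 := by positivity
    have h2 : (0:ℝ) < ((i:ℝ)+2)^2 + a^2 := by positivity
    have e : c (i+2) - c (i+1)
        = (a^2 - ((i:ℝ)+1)*((i:ℝ)+2)) / ((((i:ℝ)+1)^2+a^2)*(((i:ℝ)+2)^2+a^2)) := by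
      rw [hc]
      push_cast
      field_simp
      ring
    rw [e, abs_div, abs_of_pos (mul_pos h1 h2)]
    have hnum : |a^2 - ((i:ℝ)+1)*((i:ℝ)+2)| ≤ 2*(((i:ℝ)+1)^2+a^2) := by
      rw [abs_le]; constructor <;> nlinarith
    rw [div_le_div_iff₀ (mul_pos h1 h2) h2]
    nlinarith [mul_le_mul_of_nonneg_right hnum h2.le]
  set d : ℕ → ℝ := fun i => (c (i+2) - c (i+1)) * P (i+1) with hd
  have hdabs : ∀ i, |d i| = |c (i+2) - c (i+1)| * |P (i+1)| := by
    intro i; rw [hd]; exact abs_mul _ _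
  have hd1 : ∀ i : ℕ, |d i| ≤ 2*π*y := by
    intro i
    have h2 : (0:ℝ) < ((i:ℝ)+2)^2 + a^2 := by positivity
    rw [hdabs]
    calc |c (i+2) - c (i+1)| * |P (i+1)|
        ≤ (2 / (((i:ℝ)+2)^2 + a^2)) * (π * y * (((i+1:ℕ):ℝ))^2) :=
          mul_le_mul (hΔ i) (hP2 (i+1)) (abs_nonneg _) (by positivity)
      _ ≤ 2*π*y := by
          push_cast
          rw [div_mul_eq_mul_div, div_le_iff₀ h2]
          have hsq : ((i:ℝ)+1)^2 ≤ ((i:ℝ)+2)^2 + a^2 := by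
            nlinarith [sq_nonneg a, show (0:ℝ) ≤ (i:ℝ) from Nat.cast_nonneg i]
          nlinarith [mul_le_mul_of_nonneg_left hsq (by positivity : (0:ℝ) ≤ π*y)]
  set u : ℕ → ℝ := fun i => 1/((i:ℝ)+2+a) with hu
  have hu_pos : ∀ i : ℕ, 0 < u i := by intro i; rw [hu]; positivity
  have hd2 : ∀ i : ℕ, |d i| ≤ 16/y * (u i - u (i+1)) := by
    intro i
    have h2 : (0:ℝ) < ((i:ℝ)+2)^2 + a^2 := by positivity
    have hA : (0:ℝ) < (i:ℝ)+2+a := by positivity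
    have hB : (0:ℝ) < (i:ℝ)+3+a := by positivity
    have h1 : u i - u (i+1) = 1/(((i:ℝ)+2+a)*((i:ℝ)+3+a)) := by
      rw [hu]
      push_cast
      rw [div_sub_div _ _ hA.ne' (by positivity : ((i:ℝ)+1+2+a) ≠ 0)]
      rw [div_eq_div_iff (by positivity) (by positivity)]
      ring
    have hE : ((i:ℝ)+2+a)*((i:ℝ)+3+a) ≤ 8*((((i:ℝ)+2)^2+a^2)) := by nlinarith [sq_nonneg ((i:ℝ)+2-a)]
    rw [hdabs]
    calc |c (i+2) - c (i+1)| * |P (i+1)|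
        ≤ (2 / (((i:ℝ)+2)^2 + a^2)) * (1/y) :=
          mul_le_mul (hΔ i) (hP1 (i+1)) (abs_nonneg _) (by positivity)
      _ ≤ 16/y * (u i - u (i+1)) := by
          rw [h1, div_mul_div_comm, div_mul_div_comm, div_le_div_iff₀ (by positivity) (by positivity)]
          nlinarith [mul_le_mul_of_nonneg_left hE hy0.le]
  -- ceiling constant
  set K : ℕ := ⌈1/y⌉₊ with hK
  have hKge : 1/y ≤ (K:ℝ) := Nat.le_ceil _
  have hyK : 1 ≤ y * (K:ℝ) := by
    rw [div_le_iff₀ hy0] at hKge; linarith [hKge]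
  have h1y : (1:ℝ) ≤ 1/y := by rw [le_div_iff₀ hy0]; linarith
  have hKle : (K:ℝ) ≤ 2/y := by
    have h1 : (K:ℝ) < 1/y + 1 := Nat.ceil_lt_add_one (by positivity)
    have h2 : (2:ℝ)/y = 1/y + 1/y := by ring
    linarith
  have huKy : u K ≤ y := by
    rw [hu]
    rw [div_le_iff₀ (by positivity)]
    nlinarith [Nat.cast_nonneg (α := ℝ) K]
  -- Bound I : uniform
  have hBoundI : ∀ n, ∑ i ∈ Finset.range n, |d i| ≤ 4*π + 16 := by
    have head : ∀ m : ℕ, m ≤ K → ∑ i ∈ Finset.range m, |d i| ≤ 4*π := by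
      intro m hm
      calc ∑ i ∈ Finset.range m, |d i| ≤ ∑ i ∈ Finset.range m, (2*π*y) :=
            Finset.sum_le_sum fun i _ => hd1 i
        _ = (m:ℝ) * (2*π*y) := by rw [Finset.sum_const, Finset.card_range, nsmul_eq_mul]
        _ ≤ (2/y) * (2*π*y) := by
            have hmK : (m:ℝ) ≤ 2/y := le_trans (Nat.cast_le.mpr hm) hKle
            have : (0:ℝ) ≤ 2*π*y := by positivity
            exact mul_le_mul_of_nonneg_right hmK this
        _ = 4*π := by field_simp; ring
    intro n
    rcases le_total n K with h | h
    · linarith [head n h]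
    · rw [← Finset.sum_range_add_sum_Ico _ h]
      have tail : ∑ i ∈ Finset.Ico K n, |d i| ≤ 16 := by
        calc ∑ i ∈ Finset.Ico K n, |d i|
            ≤ ∑ i ∈ Finset.Ico K n, (16/y * (u i - u (i+1))) :=
              Finset.sum_le_sum fun i _ => hd2 i
          _ = 16/y * ∑ i ∈ Finset.Ico K n, (u i - u (i+1)) := by rw [Finset.mul_sum]
          _ = 16/y * (u K - u n) := by
              rw [Finset.sum_Ico_eq_sub _ h, Finset.sum_range_sub' u, Finset.sum_range_sub' u]
              ring
          _ ≤ 16/y * u K := by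
              have := (hu_pos n).le
              have h16 : (0:ℝ) ≤ 16/y := by positivity
              nlinarith
          _ ≤ 16 := by
              calc 16/y * u K ≤ 16/y * y := by
                    exact mul_le_mul_of_nonneg_left huKy (by positivity)
                _ = 16 := by field_simp
      linarith [head K le_rfl]
  have hsummable_abs : Summable (fun i => |d i|) :=
    summable_of_sum_range_le (fun i => abs_nonneg _) hBoundI
  have hsummable : Summable d := hsummable_abs.of_abs
  have htsum1 : ∑' i, |d i| ≤ 4*π + 16 :=
    Real.tsum_le_of_sum_range_le (fun i => abs_nonneg _) hBoundI
  -- Bound II : decay in a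
  have htsum2 : 1 ≤ y * a → ∑' i, |d i| ≤ (16*π+16)/(y*a) := by
    intro hya
    have ha1 : 1 ≤ a := by nlinarith
    have hya0 : 0 < y*a := by positivity
    have hd3 : ∀ i : ℕ, i < K → |d i| ≤ 2*π*y*(K:ℝ)^2/a^2 := by
      intro i hi
      have h2 : (0:ℝ) < ((i:ℝ)+2)^2 + a^2 := by positivity
      have hiK : (i:ℝ) + 1 ≤ (K:ℝ) := by exact_mod_cast Nat.succ_le_of_lt hi
      rw [hdabs]
      calc |c (i+2) - c (i+1)| * |P (i+1)|
          ≤ (2 / (((i:ℝ)+2)^2 + a^2)) * (π * y * (((i+1:ℕ):ℝ))^2) :=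
            mul_le_mul (hΔ i) (hP2 (i+1)) (abs_nonneg _) (by positivity)
        _ ≤ 2*π*y*(K:ℝ)^2/a^2 := by
            push_cast
            rw [div_mul_eq_mul_div, div_le_div_iff₀ h2 (by positivity : (0:ℝ) < a^2)]
            have hsq : ((i:ℝ)+1)^2 ≤ (K:ℝ)^2 := by
              nlinarith [show (0:ℝ) ≤ (i:ℝ) from Nat.cast_nonneg i]
            have hsq2 : a^2 ≤ ((i:ℝ)+2)^2 + a^2 := by
              nlinarith [show (0:ℝ) ≤ (i:ℝ) from Nat.cast_nonneg i]
            nlinarith [mul_le_mul hsq hsq2 (by positivity) (by positivity),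
              mul_pos hπ hy0]
    have headbound : (K:ℝ) * (2*π*y*(K:ℝ)^2/a^2) ≤ 16*π/(y*a) := by
      have hK0 : (0:ℝ) < (K:ℝ) := by positivity
      have hyK2 : y*(K:ℝ) ≤ 2 := by
        have := (le_div_iff₀ hy0).mp hKle
        linarith
      have e : (K:ℝ)*(2*π*y*(K:ℝ)^2/a^2) = (2*π*y*(K:ℝ)^3)/a^2 := by ring
      rw [e, div_le_div_iff₀ (by positivity : (0:ℝ) < a^2) hya0]
      have ht0 : (0:ℝ) ≤ y*(K:ℝ) := by positivity
      have h8 : (y*(K:ℝ))^3 ≤ 8 := by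
        nlinarith [mul_nonneg ht0 (sub_nonneg.2 hyK2),
          mul_nonneg (sub_nonneg.2 hyK2) (sq_nonneg (y*(K:ℝ)))]
      nlinarith [mul_le_mul_of_nonneg_right h8 (show (0:ℝ) ≤ π*a^2 by positivity),
        mul_le_mul_of_nonneg_left hya (show (0:ℝ) ≤ 2*π*y^2*a*(K:ℝ)^3 by positivity)]
    apply Real.tsum_le_of_sum_range_le (fun i => abs_nonneg _)
    intro n
    have tailK : ∀ n, K ≤ n → ∑ i ∈ Finset.Ico K n, |d i| ≤ 16/(y*a) := by
      intro n h
      calc ∑ i ∈ Finset.Ico K n, |d i|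
          ≤ ∑ i ∈ Finset.Ico K n, (16/y * (u i - u (i+1))) :=
            Finset.sum_le_sum fun i _ => hd2 i
        _ = 16/y * ∑ i ∈ Finset.Ico K n, (u i - u (i+1)) := by rw [Finset.mul_sum]
        _ = 16/y * (u K - u n) := by
            rw [Finset.sum_Ico_eq_sub _ h, Finset.sum_range_sub' u, Finset.sum_range_sub' u]
            ring
        _ ≤ 16/y * u K := by
            have := (hu_pos n).le
            have h16 : (0:ℝ) ≤ 16/y := by positivity
            nlinarith
        _ ≤ 16/(y*a) := by
            have huKa : u K ≤ 1/a := by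
              rw [hu]
              rw [div_le_div_iff₀ (by positivity) (by linarith)]
              nlinarith [Nat.cast_nonneg (α := ℝ) K]
            calc 16/y * u K ≤ 16/y * (1/a) := by
                  exact mul_le_mul_of_nonneg_left huKa (by positivity)
              _ = 16/(y*a) := by field_simp
    have headK : ∀ m : ℕ, m ≤ K → ∑ i ∈ Finset.range m, |d i| ≤ 16*π/(y*a) := by
      intro m hm
      calc ∑ i ∈ Finset.range m, |d i|
          ≤ ∑ i ∈ Finset.range m, (2*π*y*(K:ℝ)^2/a^2) :=
            Finset.sum_le_sum fun i hi => hd3 i (lt_of_lt_of_le (Finset.mem_range.mp hi) hm)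
        _ = (m:ℝ) * (2*π*y*(K:ℝ)^2/a^2) := by
            rw [Finset.sum_const, Finset.card_range, nsmul_eq_mul]
        _ ≤ (K:ℝ) * (2*π*y*(K:ℝ)^2/a^2) := by
            exact mul_le_mul_of_nonneg_right (Nat.cast_le.mpr hm) (by positivity)
        _ ≤ 16*π/(y*a) := headbound
    rcases le_total n K with h | h
    · have h1 := headK n h
      have h2 : 16*π/(y*a) ≤ (16*π+16)/(y*a) := by gcongr <;> linarith
      linarith
    · rw [← Finset.sum_range_add_sum_Ico _ h]
      have h1 := headK K le_rfl
      have h2 := tailK n h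
      have : (16*π+16)/(y*a) = 16*π/(y*a) + 16/(y*a) := by ring
      linarith
  -- Abel summation identity
  have habel : ∀ N : ℕ, 1 ≤ N →
      (∑ n ∈ Finset.Icc 1 N, (n:ℝ) * Real.sin ((n:ℝ) * π * y) / ((n:ℝ)^2 + a^2))
        = c N * P N - ∑ i ∈ Finset.range (N-1), d i := by
    intro N hN
    have e1 : (∑ n ∈ Finset.Icc 1 N, (n:ℝ) * Real.sin ((n:ℝ)*π*y) / ((n:ℝ)^2+a^2))
        = ∑ i ∈ Finset.range N, c (i+1) * Real.sin (((i:ℝ)+1) * θ) := by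
      rw [← Finset.Ico_add_one_right_eq_Icc, Finset.sum_Ico_eq_sum_range]
      try simp only [Nat.add_sub_cancel]
      refine Finset.sum_congr rfl fun i _ => ?_
      simp only [hc, hθdef]
      push_cast
      ring_nf
    rw [e1]
    have hparts := Finset.sum_range_by_parts (fun i => c (i+1))
      (fun i => Real.sin (((i:ℝ)+1) * θ)) N
    simp only [smul_eq_mul] at hparts
    rw [hparts]
    have hN1 : N - 1 + 1 = N := Nat.succ_pred_eq_of_pos hN
    rw [hN1]
  -- the limit exists
  refine ⟨-∑' i, d i, ?_, ?_⟩
  · have h1 : Tendsto (fun N : ℕ => c N * P N) atTop (nhds 0) := by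
      have ht : Tendsto (fun N : ℕ => 1/y * (1/(N:ℝ))) atTop (nhds 0) := by
        have := tendsto_one_div_atTop_nhds_zero_nat.const_mul (1/y)
        simpa using this
      refine squeeze_zero_norm ?_ ht
      · intro N
        match N with
        | 0 => simp [hP, hc]
        | (M+1) =>
          have hc1 : |c (M+1)| ≤ 1/((M:ℝ)+1) := by
            simp only [hc]
            push_cast
            rw [abs_of_nonneg (by positivity)]
            rw [div_le_div_iff₀ (by positivity) (by positivity)]
            nlinarith [sq_nonneg a, show (0:ℝ) ≤ (M:ℝ) from Nat.cast_nonneg M]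
          have := hP1 (M+1)
          calc ‖c (M+1) * P (M+1)‖ = |c (M+1)| * |P (M+1)| := abs_mul _ _
            _ ≤ (1/((M:ℝ)+1)) * (1/y) :=
                mul_le_mul hc1 (hP1 (M+1)) (abs_nonneg _) (by positivity)
            _ = 1/y * (1/((M+1:ℕ):ℝ)) := by push_cast; ring
    have h2 : Tendsto (fun N : ℕ => ∑ i ∈ Finset.range (N-1), d i) atTop
        (nhds (∑' i, d i)) :=
      hsummable.hasSum.tendsto_sum_nat.comp (tendsto_sub_atTop_nat 1)
    have h3 := h1.sub h2
    rw [zero_sub] at h3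
    refine Tendsto.congr' ?_ h3
    filter_upwards [eventually_ge_atTop 1] with N hN
    exact (habel N hN).symm
  · rw [abs_neg]
    have habs : |∑' i, d i| ≤ ∑' i, |d i| := by
      calc |∑' i, d i| = ‖∑' i, d i‖ := (Real.norm_eq_abs _).symm
        _ ≤ ∑' i, ‖d i‖ := norm_tsum_le_tsum_norm
            (by simpa [Real.norm_eq_abs] using hsummable_abs)
        _ = ∑' i, |d i| := by simp [Real.norm_eq_abs]
    have hx0 : (0:ℝ) < y*(1+a) := by nlinarith
    have hprod : y ^ (σ-1) * (1+a) ^ (σ-1) = (y*(1+a)) ^ (σ-1) :=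
      (Real.mul_rpow hy0.le (by linarith)).symm
    rw [mul_assoc, hprod]
    rcases le_total (y*(1+a)) 1 with hx1 | hx1
    · have hr : (1:ℝ) ≤ (y*(1+a)) ^ (σ-1) :=
        Real.one_le_rpow_of_pos_of_le_one_of_nonpos hx0 hx1 (by linarith)
      have hb := le_trans habs htsum1
      nlinarith
    · have hr : (y*(1+a))⁻¹ ≤ (y*(1+a)) ^ (σ-1) := by
        rw [← Real.rpow_neg_one (y*(1+a))]
        exact Real.rpow_le_rpow_of_exponent_le hx1 (by linarith)
      have h200 : |∑' i, d i| ≤ 200 * (y*(1+a))⁻¹ := by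
        rcases le_total (y*a) 1 with hya | hya
        · have hx2 : y*(1+a) ≤ 2 := by nlinarith
          have hinv : (1:ℝ)/2 ≤ 1/(y*(1+a)) := one_div_le_one_div_of_le hx0 hx2
          have hb := le_trans habs htsum1
          rw [← one_div]
          nlinarith
        · have hb := le_trans habs (htsum2 hya)
          have hya0 : (0:ℝ) < y*a := by linarith
          have hxya : y*(1+a) ≤ 2*(y*a) := by nlinarith
          have e2 : 200 * (y*(1+a))⁻¹ = 200/(y*(1+a)) := by rw [div_eq_mul_inv]
          have e1 : (16*π+16)/(y*a) ≤ 200/(y*(1+a)) := by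
            rw [div_le_div_iff₀ hya0 hx0]
            nlinarith [mul_le_mul_of_nonneg_left hxya
              (show (0:ℝ) ≤ 16*π+16 by positivity)]
          rw [e2]
          linarith
      have hscale : 200 * (y*(1+a))⁻¹ ≤ 200 * (y*(1+a)) ^ (σ-1) := by nlinarith
      linarith
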